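/- Let Σ be a finite alphabet of size q ≥ 2, n ≥ 1, δ ∈ (0,1), and set α = (1 − 1/q)(1 + δ). Let (K, Enc, Dec) be a finitary secret-key multi-message code over Σ with message space M, codeword length n, and soundness error ε_s (for every fixed γ̂ ∈ Σ^n, P_sk[Dec(sk, γ̂) ≠ invalid] ≤ ε_s). Suppose there exists a message μ ∈ M such that, with γ = Enc(sk, μ) and f the truncated uniform resampler with budget αn, the error-correction failure satisfies P[Dec(sk, f(γ)) ≠ μ ∧ f(γ) ≠ γ] ≤ ε_c. Then ε_s + ε_c ≥ 1 − q^{−n} − exp(−δ²(1 − 1/q)n/3). In particular, no secret-key code over Σ can simultaneously have negligible soundness error and negligible error-correction failure at tampering rate (1 − 1/q)(1 + δ). -/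

import Mathlib

open Finset Classical

/-- The two non-message decoding outcomes of a multi-message secret-key code
(the decoder outputs either a message, or one of these flags). -/
inductive DecFlag where
  | invalid
  | tampered
deriving DecidableEq

/-- The truncated uniform resampler with budget `b`: on codeword `γ` and uniform
randomness `u`, it outputs `u` if `dist(u, γ) ≤ b` and `γ` otherwise. -/
noncomputable def resample {S : Type} [Fintype S] [DecidableEq S] {n : ℕ}
    (b : ℝ) (γ u : Fin n → S) : Fin n → S :=
  if (hammingDist u γ : ℝ) ≤ b then u else γ


lemma log_ineq {δ : ℝ} (h0 : 0 ≤ δ) (h1 : δ ≤ 1) :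
    δ + δ ^ 2 / 3 ≤ (1 + δ) * Real.log (1 + δ) := by
  have hδ1 : (0:ℝ) < 1 + δ := by linarith
  set x : ℝ := (δ + δ ^ 2 / 3) / (1 + δ) with hx
  have hx0 : 0 ≤ x := by positivity
  have hx1 : x ≤ 1 := by
    rw [hx, div_le_one hδ1]; nlinarith
  have hxe : x * (1 + δ) = δ + δ ^ 2 / 3 := by
    rw [hx]; field_simp
  have hexp : Real.exp x ≤ 1 + x + x ^ 2 / 2 + x ^ 3 / 6 + x ^ 4 * (5 / 96) := by
    have hb := Real.exp_bound (by rw [abs_of_nonneg hx0]; exact hx1) (n := 4) (by norm_num)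
    have h2 := (abs_le.mp hb).2
    have hs : ∑ m ∈ Finset.range 4, x ^ m / (m.factorial : ℝ)
        = 1 + x + x ^ 2 / 2 + x ^ 3 / 6 := by
      norm_num [Finset.sum_range_succ, Nat.factorial]
    rw [hs, abs_of_nonneg hx0] at h2
    have hc : ((Nat.succ 4 : ℕ) : ℝ) / ((Nat.factorial 4 : ℕ) * (4:ℕ)) = 5 / 96 := by
      norm_num [Nat.factorial]
    rw [hc] at h2
    linarith
  have e1 : x * (1 + δ) ^ 4 = (δ + δ ^ 2 / 3) * (1 + δ) ^ 3 := by
    have : x * (1 + δ) ^ 4 = (x * (1 + δ)) * (1 + δ) ^ 3 := by ring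
    rw [this, hxe]
  have e2 : x ^ 2 * (1 + δ) ^ 4 = (δ + δ ^ 2 / 3) ^ 2 * (1 + δ) ^ 2 := by
    have : x ^ 2 * (1 + δ) ^ 4 = (x * (1 + δ)) ^ 2 * (1 + δ) ^ 2 := by ring
    rw [this, hxe]
  have e3 : x ^ 3 * (1 + δ) ^ 4 = (δ + δ ^ 2 / 3) ^ 3 * (1 + δ) := by
    have : x ^ 3 * (1 + δ) ^ 4 = (x * (1 + δ)) ^ 3 * (1 + δ) := by ring
    rw [this, hxe]
  have e4 : x ^ 4 * (1 + δ) ^ 4 = (δ + δ ^ 2 / 3) ^ 4 := by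
    have : x ^ 4 * (1 + δ) ^ 4 = (x * (1 + δ)) ^ 4 := by ring
    rw [this, hxe]
  have hP : (0:ℝ) ≤ 1296*δ^2 + 3888*δ^3 + 3051*δ^4 - 540*δ^5 - 1182*δ^6 - 108*δ^7 - 5*δ^8 := by
    nlinarith [pow_nonneg h0 2, pow_nonneg h0 3, pow_nonneg h0 4,
      mul_nonneg (pow_nonneg h0 4) (sub_nonneg.mpr h1),
      mul_nonneg (pow_nonneg h0 5) (sub_nonneg.mpr h1),
      mul_nonneg (pow_nonneg h0 6) (sub_nonneg.mpr h1),
      mul_nonneg (pow_nonneg h0 7) (sub_nonneg.mpr h1)]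
  have hmul : (δ - (x + x ^ 2 / 2 + x ^ 3 / 6 + x ^ 4 * (5 / 96))) * (7776 * (1 + δ) ^ 4)
      = 1296*δ^2 + 3888*δ^3 + 3051*δ^4 - 540*δ^5 - 1182*δ^6 - 108*δ^7 - 5*δ^8 := by
    linear_combination (-7776 : ℝ) * e1 + (-3888 : ℝ) * e2 + (-1296 : ℝ) * e3 + (-405 : ℝ) * e4
  have hfac : (0:ℝ) < 7776 * (1 + δ) ^ 4 := by positivity
  have hS : x + x ^ 2 / 2 + x ^ 3 / 6 + x ^ 4 * (5 / 96) ≤ δ := by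
    have h := (mul_nonneg_iff_of_pos_right hfac).mp (hmul ▸ hP)
    linarith
  have hkey : Real.exp x ≤ 1 + δ := by linarith
  have hlog : x ≤ Real.log (1 + δ) := (Real.le_log_iff_exp_le hδ1).mpr hkey
  calc δ + δ ^ 2 / 3 = x * (1 + δ) := hxe.symm
    _ ≤ Real.log (1 + δ) * (1 + δ) := by nlinarith
    _ = (1 + δ) * Real.log (1 + δ) := mul_comm _ _


lemma sum_pow_hamming {S : Type} [Fintype S] [DecidableEq S] {n : ℕ} (γ : Fin n → S) (c : ℝ) :
    ∑ u : Fin n → S, c ^ (hammingDist u γ) = ((1 : ℝ) + ((Fintype.card S : ℝ) - 1) * c) ^ n := by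
  have h1 : ∀ u : Fin n → S,
      (c : ℝ) ^ (hammingDist u γ) = ∏ i, (if u i = γ i then (1:ℝ) else c) := by
    intro u
    rw [Finset.prod_ite, Finset.prod_const_one, Finset.prod_const, one_mul]
    rfl
  simp_rw [h1]
  have h2 := Finset.prod_univ_sum (fun _ : Fin n => (Finset.univ : Finset S))
    (fun i s => if s = γ i then (1:ℝ) else c)
  rw [Fintype.piFinset_univ] at h2
  rw [← h2]
  have h3 : ∀ i : Fin n, (∑ s : S, if s = γ i then (1:ℝ) else c)
      = 1 + ((Fintype.card S : ℝ) - 1) * c := by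
    intro i
    rw [Finset.sum_ite, Finset.sum_const, Finset.sum_const, Finset.filter_eq', if_pos (Finset.mem_univ _)]
    simp only [Finset.card_singleton, nsmul_eq_mul, Nat.cast_one, one_mul]
    have : (Finset.univ.filter fun s => ¬ s = γ i).card = Fintype.card S - 1 := by
      rw [Finset.filter_not, Finset.card_sdiff_of_subset (by simp [Finset.filter_eq'])]
      simp [Finset.filter_eq', Finset.card_univ]
    rw [this]
    have : Nonempty S := ⟨γ i⟩
    have hc : 1 ≤ Fintype.card S := Fintype.card_pos
    push_cast [Nat.cast_sub hc]
    ring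
  rw [Finset.prod_congr rfl (fun i _ => h3 i), Finset.prod_const, Finset.card_univ,
    Fintype.card_fin]

lemma chernoff {S : Type} [Fintype S] [DecidableEq S] {n : ℕ} (γ : Fin n → S)
    (hq : 2 ≤ Fintype.card S) {δ : ℝ} (hδ0 : 0 < δ) (hδ1 : δ < 1) :
    ∑ u : Fin n → S, (if (1 - (Fintype.card S : ℝ)⁻¹) * (1 + δ) * n < (hammingDist u γ : ℝ)
        then ((Fintype.card S : ℝ) ^ n)⁻¹ else 0)
      ≤ Real.exp (-(δ ^ 2 * (1 - (Fintype.card S : ℝ)⁻¹) * n / 3)) := by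
  set q : ℝ := (Fintype.card S : ℝ) with hqdef
  have hq2 : (2:ℝ) ≤ q := by rw [hqdef]; exact_mod_cast hq
  have hq0 : (0:ℝ) < q := by linarith
  set p : ℝ := 1 - q⁻¹ with hpdef
  have hp0 : 0 < p := by
    have : q⁻¹ < 1 := inv_lt_one_of_one_lt₀ (by linarith)
    simp only [hpdef]; linarith
  have hp1 : p ≤ 1 := by
    have : 0 < q⁻¹ := by positivity
    simp only [hpdef]; linarith
  set b : ℝ := p * (1 + δ) * n with hbdef
  have hL0 : 0 < Real.log (1 + δ) := Real.log_pos (by linarith)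
  have h1δ : (0:ℝ) < 1 + δ := by linarith
  set L : ℝ := Real.log (1 + δ) with hLdef
  have hpow : ∀ m : ℕ, ((1:ℝ) + δ) ^ m = Real.exp (m * L) := by
    intro m
    rw [hLdef, Real.exp_nat_mul, Real.exp_log h1δ]
  -- pointwise bound
  have hpt : ∀ u : Fin n → S,
      (if b < (hammingDist u γ : ℝ) then (q ^ n)⁻¹ else 0)
        ≤ (q ^ n)⁻¹ * Real.exp (-(b * L)) * ((1:ℝ) + δ) ^ (hammingDist u γ) := by
    intro u
    by_cases h : b < (hammingDist u γ : ℝ)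
    · rw [if_pos h, hpow]
      have : (1:ℝ) ≤ Real.exp (-(b * L)) * Real.exp ((hammingDist u γ : ℝ) * L) := by
        rw [← Real.exp_add]
        refine Real.one_le_exp ?_
        have : 0 ≤ ((hammingDist u γ : ℝ) - b) * L :=
          mul_nonneg (by linarith) hL0.le
        nlinarith
      calc (q ^ n)⁻¹ = (q ^ n)⁻¹ * 1 := by ring
        _ ≤ (q ^ n)⁻¹ * (Real.exp (-(b * L)) * Real.exp ((hammingDist u γ : ℝ) * L)) := by
            apply mul_le_mul_of_nonneg_left this (by positivity)
        _ = (q ^ n)⁻¹ * Real.exp (-(b * L)) * Real.exp ((hammingDist u γ : ℝ) * L) := by ring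
    · rw [if_neg h]
      positivity
  calc ∑ u : Fin n → S, (if b < (hammingDist u γ : ℝ) then (q ^ n)⁻¹ else 0)
      ≤ ∑ u : Fin n → S, (q ^ n)⁻¹ * Real.exp (-(b * L)) * ((1:ℝ) + δ) ^ (hammingDist u γ) :=
        Finset.sum_le_sum (fun u _ => hpt u)
    _ = (q ^ n)⁻¹ * Real.exp (-(b * L)) * ((1 + (q - 1) * (1 + δ)) ^ n) := by
        rw [← Finset.mul_sum, sum_pow_hamming γ (1 + δ)]
    _ = Real.exp (-(b * L)) * ((1 + p * δ) ^ n) := by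
        have he : (1 + (q - 1) * (1 + δ)) / q = 1 + p * δ := by
          rw [hpdef, div_eq_iff hq0.ne']; linear_combination δ * inv_mul_cancel₀ hq0.ne'
        rw [← he, div_pow]
        rw [eq_comm]
        field_simp
    _ ≤ Real.exp (-(b * L)) * Real.exp (p * δ * n) := by
        apply mul_le_mul_of_nonneg_left _ (Real.exp_nonneg _)
        have h1 : (0:ℝ) ≤ 1 + p * δ := by nlinarith
        have h2 : 1 + p * δ ≤ Real.exp (p * δ) := by
          have := Real.add_one_le_exp (p * δ); linarith
        calc (1 + p * δ) ^ n ≤ Real.exp (p * δ) ^ n := pow_le_pow_left₀ h1 h2 n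
          _ = Real.exp (p * δ * n) := by rw [← Real.exp_nat_mul]; ring_nf
    _ = Real.exp (p * δ * n - b * L) := by rw [← Real.exp_add]; ring_nf
    _ ≤ Real.exp (-(δ ^ 2 * p * n / 3)) := by
        apply Real.exp_le_exp.mpr
        have hli := log_ineq hδ0.le hδ1.le
        have hn0 : (0:ℝ) ≤ (n:ℝ) := Nat.cast_nonneg n
        have := mul_le_mul_of_nonneg_left hli (mul_nonneg hp0.le hn0)
        rw [hbdef, hLdef]
        nlinarith

/-- For a secret-key multi-message code over an alphabet of size `q ≥ 2`
with soundness error `εs`: if for some message `μ` the error-correction failure against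
the truncated uniform resampler with budget `α·n` (where `α = (1 - 1/q)(1 + δ)`,
`δ ∈ (0,1)`) is at most `εc`, then `εs + εc ≥ 1 - q^(-n) - exp(-δ²(1 - 1/q)n/3)`. -/
theorem stmt_6
    {S K M : Type} [Fintype S] [DecidableEq S] [Fintype K] [Nonempty K]
    {n : ℕ} (hn : 1 ≤ n) (hq : 2 ≤ Fintype.card S)
    (δ : ℝ) (hδ0 : 0 < δ) (hδ1 : δ < 1)
    (w : K → ℝ) (hw0 : ∀ k, 0 ≤ w k) (hw1 : ∑ k, w k = 1)
    (Enc : K → M → Fin n → S) (Dec : K → (Fin n → S) → M ⊕ DecFlag)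
    (εs εc : ℝ)
    (hsound : ∀ γ : Fin n → S,
      (∑ k, if Dec k γ ≠ Sum.inr DecFlag.invalid then w k else 0) ≤ εs)
    (μ : M)
    (hec :
      (∑ k, ∑ u : Fin n → S,
        if Dec k (resample ((1 - (Fintype.card S : ℝ)⁻¹) * (1 + δ) * n) (Enc k μ) u)
              ≠ Sum.inl μ
           ∧ resample ((1 - (Fintype.card S : ℝ)⁻¹) * (1 + δ) * n) (Enc k μ) u ≠ Enc k μ
        then w k * ((Fintype.card S : ℝ) ^ n)⁻¹ else 0) ≤ εc) :
    1 - ((Fintype.card S : ℝ) ^ n)⁻¹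
      - Real.exp (-(δ ^ 2 * (1 - (Fintype.card S : ℝ)⁻¹) * n / 3)) ≤ εs + εc := by
  classical
  set q : ℝ := (Fintype.card S : ℝ) with hqdef
  have hq0 : (0:ℝ) < q := by
    rw [hqdef]; exact_mod_cast lt_of_lt_of_le (by norm_num) hq
  have hqn0 : (0:ℝ) < q ^ n := by positivity
  set b : ℝ := (1 - q⁻¹) * (1 + δ) * n with hbdef
  set E : ℝ := Real.exp (-(δ ^ 2 * (1 - q⁻¹) * n / 3)) with hEdef
  set T : ℝ := ∑ k, ∑ u : Fin n → S,
    (if (hammingDist u (Enc k μ) : ℝ) ≤ b ∧ u ≠ Enc k μ then w k * (q ^ n)⁻¹ else 0)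
    with hTdef
  -- upper bound : T ≤ εc + εs
  have hupper : T ≤ εc + εs := by
    have hpt : ∀ k, ∀ u : Fin n → S,
        (if (hammingDist u (Enc k μ) : ℝ) ≤ b ∧ u ≠ Enc k μ then w k * (q ^ n)⁻¹ else 0)
        ≤ (if Dec k (resample b (Enc k μ) u) ≠ Sum.inl μ
              ∧ resample b (Enc k μ) u ≠ Enc k μ then w k * (q ^ n)⁻¹ else 0)
          + (if Dec k u ≠ Sum.inr DecFlag.invalid then w k * (q ^ n)⁻¹ else 0) := by
      intro k u
      have hterm0 : (0:ℝ) ≤ w k * (q ^ n)⁻¹ := mul_nonneg (hw0 k) (by positivity)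
      by_cases h : (hammingDist u (Enc k μ) : ℝ) ≤ b ∧ u ≠ Enc k μ
      · rw [if_pos h]
        have hres : resample b (Enc k μ) u = u := by
          rw [resample, if_pos h.1]
        by_cases hD : Dec k u = Sum.inl μ
        · have h2 : Dec k u ≠ Sum.inr DecFlag.invalid := by rw [hD]; simp
          rw [if_pos h2]
          have : (0:ℝ) ≤ (if Dec k (resample b (Enc k μ) u) ≠ Sum.inl μ
              ∧ resample b (Enc k μ) u ≠ Enc k μ then w k * (q ^ n)⁻¹ else 0) := by
            split_ifs <;> simp [hterm0]
          linarith
        · have h2 : Dec k (resample b (Enc k μ) u) ≠ Sum.inl μ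
              ∧ resample b (Enc k μ) u ≠ Enc k μ := by
            rw [hres]; exact ⟨hD, h.2⟩
          rw [if_pos h2]
          have : (0:ℝ) ≤ (if Dec k u ≠ Sum.inr DecFlag.invalid then w k * (q ^ n)⁻¹ else 0) := by
            split_ifs <;> simp [hterm0]
          linarith
      · rw [if_neg h]
        have h1 : (0:ℝ) ≤ (if Dec k (resample b (Enc k μ) u) ≠ Sum.inl μ
            ∧ resample b (Enc k μ) u ≠ Enc k μ then w k * (q ^ n)⁻¹ else 0) := by
          split_ifs <;> simp [hterm0]
        have h2 : (0:ℝ) ≤ (if Dec k u ≠ Sum.inr DecFlag.invalid then w k * (q ^ n)⁻¹ else 0) := by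
          split_ifs <;> simp [hterm0]
        linarith
    have hsum : T ≤ (∑ k, ∑ u : Fin n → S,
        (if Dec k (resample b (Enc k μ) u) ≠ Sum.inl μ
              ∧ resample b (Enc k μ) u ≠ Enc k μ then w k * (q ^ n)⁻¹ else 0))
        + (∑ k, ∑ u : Fin n → S,
        (if Dec k u ≠ Sum.inr DecFlag.invalid then w k * (q ^ n)⁻¹ else 0)) := by
      rw [hTdef, ← Finset.sum_add_distrib]
      apply Finset.sum_le_sum
      intro k _
      rw [← Finset.sum_add_distrib]
      exact Finset.sum_le_sum (fun u _ => hpt k u)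
    have hs2 : (∑ k, ∑ u : Fin n → S,
        (if Dec k u ≠ Sum.inr DecFlag.invalid then w k * (q ^ n)⁻¹ else 0)) ≤ εs := by
      rw [Finset.sum_comm]
      have hcard : (Fintype.card (Fin n → S) : ℝ) = q ^ n := by
        rw [hqdef]; push_cast [Fintype.card_fun, Fintype.card_fin]; norm_num
      have hinner : ∀ u : Fin n → S,
          (∑ k, if Dec k u ≠ Sum.inr DecFlag.invalid then w k * (q ^ n)⁻¹ else 0)
          ≤ εs * (q ^ n)⁻¹ := by
        intro u
        have : (∑ k, if Dec k u ≠ Sum.inr DecFlag.invalid then w k * (q ^ n)⁻¹ else 0)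
            = (∑ k, if Dec k u ≠ Sum.inr DecFlag.invalid then w k else 0) * (q ^ n)⁻¹ := by
          rw [Finset.sum_mul]
          congr 1; funext k
          split_ifs <;> simp
        rw [this]
        exact mul_le_mul_of_nonneg_right (hsound u) (by positivity)
      calc (∑ u : Fin n → S, ∑ k, if Dec k u ≠ Sum.inr DecFlag.invalid then w k * (q ^ n)⁻¹ else 0)
          ≤ ∑ u : Fin n → S, εs * (q ^ n)⁻¹ := Finset.sum_le_sum (fun u _ => hinner u)
        _ = (Fintype.card (Fin n → S) : ℝ) * (εs * (q ^ n)⁻¹) := by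
            rw [Finset.sum_const, Finset.card_univ, nsmul_eq_mul]
        _ = εs := by rw [hcard]; field_simp
    exact hsum.trans (add_le_add hec hs2)
  -- lower bound : 1 - (q^n)⁻¹ - E ≤ T
  have hlower : 1 - (q ^ n)⁻¹ - E ≤ T := by
    have hinner : ∀ k, 1 - (q ^ n)⁻¹ - E ≤
        ∑ u : Fin n → S, (if (hammingDist u (Enc k μ) : ℝ) ≤ b ∧ u ≠ Enc k μ
          then (q ^ n)⁻¹ else 0) := by
      intro k
      set γ := Enc k μ with hγ
      have hcard : (Fintype.card (Fin n → S) : ℝ) = q ^ n := by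
        rw [hqdef]; push_cast [Fintype.card_fun, Fintype.card_fin]; norm_num
      have hone : (∑ _u : Fin n → S, (q ^ n)⁻¹) = 1 := by
        rw [Finset.sum_const, Finset.card_univ, nsmul_eq_mul, hcard]; field_simp
      have hsplit : ∀ u : Fin n → S, (q ^ n)⁻¹ ≤
          (if (hammingDist u γ : ℝ) ≤ b ∧ u ≠ γ then (q ^ n)⁻¹ else 0)
          + (if u = γ then (q ^ n)⁻¹ else 0)
          + (if b < (hammingDist u γ : ℝ) then (q ^ n)⁻¹ else 0) := by
        intro u
        by_cases h1 : u = γ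
        · rw [if_pos h1]
          have : ¬ ((hammingDist u γ : ℝ) ≤ b ∧ u ≠ γ) := fun h => h.2 h1
          rw [if_neg this]
          have h0 : (0:ℝ) ≤ (q ^ n)⁻¹ := by positivity
          split_ifs <;> linarith
        · rw [if_neg h1]
          by_cases h2 : (hammingDist u γ : ℝ) ≤ b
          · rw [if_pos ⟨h2, h1⟩, if_neg (not_lt.mpr h2)]
            simp
          · rw [if_pos (not_le.mp h2)]
            have : ¬ ((hammingDist u γ : ℝ) ≤ b ∧ u ≠ γ) := fun h => h2 h.1
            rw [if_neg this]
            simp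
      have hγsum : (∑ u : Fin n → S, (if u = γ then (q ^ n)⁻¹ else 0)) = (q ^ n)⁻¹ := by
        rw [Finset.sum_ite_eq' Finset.univ γ (fun _ => (q ^ n)⁻¹), if_pos (Finset.mem_univ _)]
      have hch := chernoff γ hq hδ0 hδ1
      rw [← hqdef, ← hbdef, ← hEdef] at hch
      have := Finset.sum_le_sum (fun u (_ : u ∈ Finset.univ) => hsplit u)
      rw [hone, Finset.sum_add_distrib, Finset.sum_add_distrib, hγsum] at this
      linarith
    have : ∀ k, w k * (1 - (q ^ n)⁻¹ - E) ≤
        ∑ u : Fin n → S, (if (hammingDist u (Enc k μ) : ℝ) ≤ b ∧ u ≠ Enc k μ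
          then w k * (q ^ n)⁻¹ else 0) := by
      intro k
      have h2 : (∑ u : Fin n → S, (if (hammingDist u (Enc k μ) : ℝ) ≤ b ∧ u ≠ Enc k μ
          then w k * (q ^ n)⁻¹ else 0))
          = w k * ∑ u : Fin n → S, (if (hammingDist u (Enc k μ) : ℝ) ≤ b ∧ u ≠ Enc k μ
          then (q ^ n)⁻¹ else 0) := by
        rw [Finset.mul_sum]
        congr 1; funext u
        split_ifs <;> simp
      rw [h2]
      exact mul_le_mul_of_nonneg_left (hinner k) (hw0 k)
    calc 1 - (q ^ n)⁻¹ - E = (∑ k, w k) * (1 - (q ^ n)⁻¹ - E) := by rw [hw1, one_mul]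
      _ = ∑ k, w k * (1 - (q ^ n)⁻¹ - E) := by rw [Finset.sum_mul]
      _ ≤ T := Finset.sum_le_sum (fun k _ => this k)
  linarith
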